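/- Let A be a unital complex Banach algebra, let D, η ∈ A, let d ∈ ℝ be a scalar, and set h := d·1 + η. Then sinh(dD)·cosh(Dη) + cosh(dD)·sinh(Dη) = sinh(Dh), where cosh(dD) := Σ_{n≥0} d^{2n}D^{2n}/(2n)!, sinh(dD) := Σ_{n≥0} d^{2n+1}D^{2n+1}/(2n+1)!, cosh(Dη) := Σ_{n≥0} D^{2n}η^{2n}/(2n)!, sinh(Dη) := Σ_{n≥0} D^{2n+1}η^{2n+1}/(2n+1)!, and sinh(Dh) := Σ_{n≥0} D^{2n+1}h^{2n+1}/(2n+1)! (all series converge absolutely). -/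

import Mathlib

open scoped Nat

private lemma sum_range_two_mul_aux {M : Type*} [AddCommMonoid M] (f : ℕ → M) (n : ℕ) :
    ∑ i ∈ Finset.range (2 * n), f i = ∑ j ∈ Finset.range n, (f (2 * j) + f (2 * j + 1)) := by
  induction n with
  | zero => simp
  | succ n ih =>
    rw [Finset.sum_range_succ, ← ih, Nat.mul_succ, Finset.sum_range_succ, Finset.sum_range_succ,
      add_assoc]

private lemma norm_pow_le_max {A : Type*} [NormedRing A] (x : A) (k : ℕ) :
    ‖x ^ k‖ ≤ max 1 ‖(1 : A)‖ * ‖x‖ ^ k := by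
  cases k with
  | zero => simp only [pow_zero, mul_one]; simpa using le_max_right 1 ‖(1 : A)‖
  | succ k =>
    exact le_trans (norm_pow_le' x k.succ_pos)
      (le_mul_of_one_le_left (by positivity) (le_max_left _ _))

private lemma summable_of_bound (f : ℕ → ℝ) (C s : ℝ) (g : ℕ → ℕ) (hg : Function.Injective g)
    (h0 : ∀ n, 0 ≤ f n) (hle : ∀ n, f n ≤ C * (s ^ g n / (g n)!)) : Summable f :=
  Summable.of_nonneg_of_le h0 hle
    (((Real.summable_pow_div_factorial s).comp_injective hg).mul_left C)

private lemma norm_smul_mul_le {A : Type*} [NormedRing A] [NormedAlgebra ℂ A] (c : ℂ) (x y : A) (k l : ℕ) :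
    ‖c • (x ^ k * y ^ l)‖ ≤
      ‖c‖ * ((max 1 ‖(1 : A)‖ * ‖x‖ ^ k) * (max 1 ‖(1 : A)‖ * ‖y‖ ^ l)) := by
  rw [norm_smul]
  gcongr
  calc ‖x ^ k * y ^ l‖ ≤ ‖x ^ k‖ * ‖y ^ l‖ := norm_mul_le _ _
    _ ≤ _ := mul_le_mul (norm_pow_le_max x k) (norm_pow_le_max y l) (norm_nonneg _)
        (by positivity)

private lemma key_lemma {A : Type*} [NormedRing A] [NormedAlgebra ℂ A]
    (D η : A) (d : ℝ) (n : ℕ) :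
    (∑ k ∈ Finset.range (n + 1),
        (((d : ℂ) ^ (2 * k + 1) / ((2 * k + 1)! : ℂ)) • D ^ (2 * k + 1)) *
          ((((2 * (n - k))! : ℂ))⁻¹ • (D ^ (2 * (n - k)) * η ^ (2 * (n - k))))) +
    (∑ k ∈ Finset.range (n + 1),
        (((d : ℂ) ^ (2 * k) / ((2 * k)! : ℂ)) • D ^ (2 * k)) *
          ((((2 * (n - k) + 1)! : ℂ))⁻¹ •
            (D ^ (2 * (n - k) + 1) * η ^ (2 * (n - k) + 1)))) =
    (((2 * n + 1)! : ℂ))⁻¹ • (D ^ (2 * n + 1) * ((d : ℂ) • (1 : A) + η) ^ (2 * n + 1)) := by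
  have hcomm : Commute ((d : ℂ) • (1 : A)) η := (Commute.one_left η).smul_left _
  rw [hcomm.add_pow]
  have hrhs : ∀ m ∈ Finset.range (2 * n + 1 + 1),
      ((d : ℂ) • (1 : A)) ^ m * η ^ (2 * n + 1 - m) * (((2 * n + 1).choose m : ℕ) : A)
        = ((((2 * n + 1).choose m : ℂ)) * (d : ℂ) ^ m) • η ^ (2 * n + 1 - m) := by
    intro m _
    rw [smul_pow, one_pow, smul_mul_assoc, one_mul,
      show ((((2 * n + 1).choose m : ℕ)) : A) = (((2 * n + 1).choose m : ℂ)) • (1 : A) by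
        rw [← Algebra.algebraMap_eq_smul_one]; simp,
      mul_smul_comm, mul_one, smul_smul]
  rw [Finset.sum_congr rfl hrhs, Finset.mul_sum, Finset.smul_sum]
  simp_rw [mul_smul_comm, smul_smul]
  rw [show 2 * n + 1 + 1 = 2 * (n + 1) by ring, sum_range_two_mul_aux, ← Finset.sum_add_distrib]
  refine Finset.sum_congr rfl fun j hj => ?_
  have hjn : j ≤ n := by simpa [Nat.lt_succ_iff] using hj
  have e1 : 2 * j + 1 + 2 * (n - j) = 2 * n + 1 := by omega
  have e2 : 2 * j + (2 * (n - j) + 1) = 2 * n + 1 := by omega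
  have e3 : 2 * n + 1 - (2 * j + 1) = 2 * (n - j) := by omega
  have e4 : 2 * n + 1 - 2 * j = 2 * (n - j) + 1 := by omega
  have f1 : (((2 * j + 1)! : ℂ)) ≠ 0 := Nat.cast_ne_zero.2 (Nat.factorial_ne_zero _)
  have f2 : (((2 * j)! : ℂ)) ≠ 0 := Nat.cast_ne_zero.2 (Nat.factorial_ne_zero _)
  have f3 : (((2 * (n - j))! : ℂ)) ≠ 0 := Nat.cast_ne_zero.2 (Nat.factorial_ne_zero _)
  have f4 : (((2 * (n - j) + 1)! : ℂ)) ≠ 0 := Nat.cast_ne_zero.2 (Nat.factorial_ne_zero _)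
  have f5 : (((2 * n + 1)! : ℂ)) ≠ 0 := Nat.cast_ne_zero.2 (Nat.factorial_ne_zero _)
  have hs1 : (((2 * (n - j))! : ℂ))⁻¹ * ((d : ℂ) ^ (2 * j + 1) / ((2 * j + 1)! : ℂ))
      = (((2 * n + 1)! : ℂ))⁻¹ * ((((2 * n + 1).choose (2 * j + 1) : ℂ)) * (d : ℂ) ^ (2 * j + 1)) := by
    rw [Nat.cast_choose ℂ (by omega : 2 * j + 1 ≤ 2 * n + 1), e3]
    field_simp
  have hs2 : (((2 * (n - j) + 1)! : ℂ))⁻¹ * ((d : ℂ) ^ (2 * j) / ((2 * j)! : ℂ))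
      = (((2 * n + 1)! : ℂ))⁻¹ * ((((2 * n + 1).choose (2 * j) : ℂ)) * (d : ℂ) ^ (2 * j)) := by
    rw [Nat.cast_choose ℂ (by omega : 2 * j ≤ 2 * n + 1), e4]
    field_simp
  rw [smul_mul_assoc, smul_mul_assoc, smul_smul, smul_smul,
    ← mul_assoc (D ^ (2 * j + 1)), ← pow_add, e1,
    ← mul_assoc (D ^ (2 * j)), ← pow_add, e2, e3, e4, hs1, hs2, add_comm]

private lemma summable_norm_A {A : Type*} [NormedRing A] [NormedAlgebra ℂ A]
    (x : A) (r : ℝ) (hr : 0 ≤ r) (c : ℕ → ℂ) (g : ℕ → ℕ) (hg : Function.Injective g)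
    (hc : ∀ n, ‖c n‖ = r ^ g n / (g n)!) :
    Summable fun n => ‖c n • x ^ g n‖ := by
  apply summable_of_bound _ (max 1 ‖(1 : A)‖) (r * ‖x‖) g hg (fun n => norm_nonneg _)
  intro n
  rw [norm_smul, hc]
  calc (r ^ g n / (g n)!) * ‖x ^ g n‖
      ≤ (r ^ g n / (g n)!) * (max 1 ‖(1 : A)‖ * ‖x‖ ^ g n) := by
        exact mul_le_mul_of_nonneg_left (norm_pow_le_max _ _) (by positivity)
    _ = max 1 ‖(1 : A)‖ * ((r * ‖x‖) ^ g n / (g n)!) := by rw [mul_pow]; ring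

private lemma summable_norm_B {A : Type*} [NormedRing A] [NormedAlgebra ℂ A]
    (x y : A) (c : ℕ → ℂ) (g : ℕ → ℕ) (hg : Function.Injective g)
    (hc : ∀ n, ‖c n‖ = (((g n)! : ℝ))⁻¹) :
    Summable fun n => ‖c n • (x ^ g n * y ^ g n)‖ := by
  apply summable_of_bound _ (max 1 ‖(1 : A)‖ * max 1 ‖(1 : A)‖) (‖x‖ * ‖y‖) g hg
    (fun n => norm_nonneg _)
  intro n
  calc ‖c n • (x ^ g n * y ^ g n)‖
      ≤ ‖c n‖ * ((max 1 ‖(1 : A)‖ * ‖x‖ ^ g n) * (max 1 ‖(1 : A)‖ * ‖y‖ ^ g n)) :=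
        norm_smul_mul_le _ _ _ _ _
    _ = max 1 ‖(1 : A)‖ * max 1 ‖(1 : A)‖ * ((‖x‖ * ‖y‖) ^ g n / (g n)!) := by
        rw [hc, mul_pow]; ring

/-- Constant-depth identity `sinh(dD)·cosh(Dη) + cosh(dD)·sinh(Dη) = sinh(Dh)`
in a unital complex Banach algebra, with `h = d·1 + η`. -/
theorem stmt_1 (A : Type*) [NormedRing A] [NormedAlgebra ℂ A] [CompleteSpace A]
    (D η : A) (d : ℝ) (h : A) (hdef : h = (d : ℂ) • (1 : A) + η) :
    (Summable fun n : ℕ => ‖((d : ℂ) ^ (2 * n) / ((2 * n)! : ℂ)) • D ^ (2 * n)‖) ∧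
    (Summable fun n : ℕ => ‖((d : ℂ) ^ (2 * n + 1) / ((2 * n + 1)! : ℂ)) • D ^ (2 * n + 1)‖) ∧
    (Summable fun n : ℕ => ‖(((2 * n)! : ℂ))⁻¹ • (D ^ (2 * n) * η ^ (2 * n))‖) ∧
    (Summable fun n : ℕ => ‖(((2 * n + 1)! : ℂ))⁻¹ • (D ^ (2 * n + 1) * η ^ (2 * n + 1))‖) ∧
    (Summable fun n : ℕ => ‖(((2 * n + 1)! : ℂ))⁻¹ • (D ^ (2 * n + 1) * h ^ (2 * n + 1))‖) ∧
    (∑' n : ℕ, ((d : ℂ) ^ (2 * n + 1) / ((2 * n + 1)! : ℂ)) • D ^ (2 * n + 1)) *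
        (∑' n : ℕ, (((2 * n)! : ℂ))⁻¹ • (D ^ (2 * n) * η ^ (2 * n))) +
      (∑' n : ℕ, ((d : ℂ) ^ (2 * n) / ((2 * n)! : ℂ)) • D ^ (2 * n)) *
        (∑' n : ℕ, (((2 * n + 1)! : ℂ))⁻¹ • (D ^ (2 * n + 1) * η ^ (2 * n + 1))) =
      ∑' n : ℕ, (((2 * n + 1)! : ℂ))⁻¹ • (D ^ (2 * n + 1) * h ^ (2 * n + 1)) := by
  subst hdef
  have hg1 : Function.Injective (fun n : ℕ => 2 * n) := fun a b hab => by simp only at hab; omega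
  have hg2 : Function.Injective (fun n : ℕ => 2 * n + 1) := fun a b hab => by simp only at hab; omega
  have hc1 : ∀ n : ℕ, ‖(d : ℂ) ^ (2 * n) / ((2 * n)! : ℂ)‖ = ‖d‖ ^ (2 * n) / ((2 * n)! : ℝ) := by
    intro n
    rw [norm_div, norm_pow, Complex.norm_real, RCLike.norm_natCast]
  have hc2 : ∀ n : ℕ, ‖(d : ℂ) ^ (2 * n + 1) / ((2 * n + 1)! : ℂ)‖
      = ‖d‖ ^ (2 * n + 1) / ((2 * n + 1)! : ℝ) := by
    intro n
    rw [norm_div, norm_pow, Complex.norm_real, RCLike.norm_natCast]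
  have hc3 : ∀ n : ℕ, ‖(((2 * n)! : ℂ))⁻¹‖ = (((2 * n)! : ℝ))⁻¹ := by
    intro n
    rw [norm_inv, RCLike.norm_natCast]
  have hc4 : ∀ n : ℕ, ‖(((2 * n + 1)! : ℂ))⁻¹‖ = (((2 * n + 1)! : ℝ))⁻¹ := by
    intro n
    rw [norm_inv, RCLike.norm_natCast]
  have S1 : Summable fun n : ℕ => ‖((d : ℂ) ^ (2 * n) / ((2 * n)! : ℂ)) • D ^ (2 * n)‖ :=
    summable_norm_A D ‖d‖ (norm_nonneg d) _ _ hg1 hc1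
  have S2 : Summable fun n : ℕ =>
      ‖((d : ℂ) ^ (2 * n + 1) / ((2 * n + 1)! : ℂ)) • D ^ (2 * n + 1)‖ :=
    summable_norm_A D ‖d‖ (norm_nonneg d) _ _ hg2 hc2
  have S3 : Summable fun n : ℕ => ‖(((2 * n)! : ℂ))⁻¹ • (D ^ (2 * n) * η ^ (2 * n))‖ :=
    summable_norm_B D η _ _ hg1 hc3
  have S4 : Summable fun n : ℕ =>
      ‖(((2 * n + 1)! : ℂ))⁻¹ • (D ^ (2 * n + 1) * η ^ (2 * n + 1))‖ :=
    summable_norm_B D η _ _ hg2 hc4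
  have S5 : Summable fun n : ℕ =>
      ‖(((2 * n + 1)! : ℂ))⁻¹ • (D ^ (2 * n + 1) * ((d : ℂ) • (1 : A) + η) ^ (2 * n + 1))‖ :=
    summable_norm_B D ((d : ℂ) • (1 : A) + η) _ _ hg2 hc4
  refine ⟨S1, S2, S3, S4, S5, ?_⟩
  rw [tsum_mul_tsum_eq_tsum_sum_range_of_summable_norm S2 S3,
    tsum_mul_tsum_eq_tsum_sum_range_of_summable_norm S1 S4,
    ← Summable.tsum_add ((summable_norm_sum_mul_range_of_summable_norm S2 S3).of_norm)
      ((summable_norm_sum_mul_range_of_summable_norm S1 S4).of_norm)]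
  exact tsum_congr fun n => key_lemma D η d n
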